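/- Let (Ω, Σ, P) be a probability space, let k be a positive integer, and let X : Ω → (0,∞) be a random variable such that X, log(X), X^j, and X^{−j} for 1 ≤ j ≤ 2k−1 are integrable. Then ∑_{j=1}^{2k−1} ( 1/j + b_{k,j} · E[X^j] · (E[X])^{−j} ) ≤ log(E[X]) − E[log(X)] ≤ −∑_{j=1}^{2k−1} ( 1/j + b_{k,j} · E[X^{−j}] · (E[X])^{j} ). -/

import Mathlib

open MeasureTheory ProbabilityTheory Finset



lemma key_id' (n : ℕ) (y : ℝ) :
    ∑ i ∈ range n, ((-1:ℝ)^(i+1) / (i+1)) * ((n.choose (i+1)) : ℝ) * y^(i+1)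
      = ∑ i ∈ range n, (((1-y)^(i+1) - 1) / (i+1)) := by
  induction n with
  | zero => simp
  | succ n ih =>
    have pascal : ∀ i : ℕ, ((n+1).choose (i+1) : ℝ) = (n.choose (i+1) : ℝ) + (n.choose i : ℝ) := by
      intro i
      rw [Nat.choose_succ_succ']
      push_cast; ring
    have split : ∑ i ∈ range (n+1), ((-1:ℝ)^(i+1) / (i+1)) * (((n+1).choose (i+1)) : ℝ) * y^(i+1)
        = (∑ i ∈ range (n+1), ((-1:ℝ)^(i+1) / (i+1)) * ((n.choose (i+1)) : ℝ) * y^(i+1))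
          + ∑ i ∈ range (n+1), ((-1:ℝ)^(i+1) / (i+1)) * ((n.choose i) : ℝ) * y^(i+1) := by
      rw [← Finset.sum_add_distrib]
      refine Finset.sum_congr rfl fun i _ => ?_
      rw [pascal]; ring
    have drop : ∑ i ∈ range (n+1), ((-1:ℝ)^(i+1) / (i+1)) * ((n.choose (i+1)) : ℝ) * y^(i+1)
        = ∑ i ∈ range n, ((-1:ℝ)^(i+1) / (i+1)) * ((n.choose (i+1)) : ℝ) * y^(i+1) := by
      rw [Finset.sum_range_succ, Nat.choose_succ_self]; simp
    -- coefficient identity: choose n i / (i+1) = choose (n+1) (i+1) / (n+1)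
    have coeff : ∀ i : ℕ, ((n.choose i : ℝ)) / (i+1) = (((n+1).choose (i+1) : ℝ)) / (n+1) := by
      intro i
      have h := Nat.add_one_mul_choose_eq n i
      have h' : ((n:ℝ)+1) * (n.choose i : ℝ) = (((n+1).choose (i+1)) : ℝ) * ((i:ℝ)+1) := by
        exact_mod_cast congrArg (Nat.cast (R := ℝ)) h
      have hi : ((i:ℝ)+1) ≠ 0 := by positivity
      have hn : ((n:ℝ)+1) ≠ 0 := by positivity
      field_simp
      linarith [h']
    have corr : ∑ i ∈ range (n+1), ((-1:ℝ)^(i+1) / (i+1)) * ((n.choose i) : ℝ) * y^(i+1)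
        = ((1-y)^(n+1) - 1) / (n+1) := by
      have binom : ((-y) + 1)^(n+1) = ∑ m ∈ range (n+2), (-y)^m * ((n+1).choose m : ℝ) := by
        rw [add_pow]; simp
      rw [Finset.sum_range_succ'] at binom
      simp only [pow_zero, one_mul, Nat.choose_zero_right, Nat.cast_one, mul_one] at binom
      have : ∑ i ∈ range (n+1), ((-1:ℝ)^(i+1) / (i+1)) * ((n.choose i) : ℝ) * y^(i+1)
          = ∑ i ∈ range (n+1), (-y)^(i+1) * (((n+1).choose (i+1) : ℝ)) / (n+1) := by
        refine Finset.sum_congr rfl fun i _ => ?_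
        have := coeff i
        have : ((n.choose i : ℝ)) = (((n+1).choose (i+1) : ℝ)) * ((i:ℝ)+1) / (n+1) := by
          have hn : ((n:ℝ)+1) ≠ 0 := by positivity
          have hi : ((i:ℝ)+1) ≠ 0 := by positivity
          field_simp at this ⊢
          linarith [this]
        rw [this]
        have hi : ((i:ℝ)+1) ≠ 0 := by positivity
        have hn : ((n:ℝ)+1) ≠ 0 := by positivity
        rw [neg_pow]
        push_cast
        field_simp
        ring
      rw [this, ← Finset.sum_div]
      have h2 : ∑ i ∈ range (n+1), (-y)^(i+1) * (((n+1).choose (i+1) : ℝ)) = (1-y)^(n+1) - 1 := by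
        have : (1 - y : ℝ) = -y + 1 := by ring
        rw [this, binom]; ring
      rw [h2]
    rw [split, drop, ih, corr, Finset.sum_range_succ]


noncomputable def Hfun (n : ℕ) (y : ℝ) : ℝ :=
  ∑ i ∈ range n, (1-y)^(i+1) / (i+1) + Real.log y

lemma Hfun_hasDerivAt (n : ℕ) {x : ℝ} (hx : x ≠ 0) :
    HasDerivAt (Hfun n) ((1-x)^n / x) x := by
  have hsum : HasDerivAt (fun y : ℝ => ∑ i ∈ range n, (1-y)^(i+1) / (i+1))
      (∑ i ∈ range n, -(1-x)^i) x := by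
    apply HasDerivAt.fun_sum
    intro i _
    have h1 : HasDerivAt (fun y : ℝ => 1 - y) (-1) x := (hasDerivAt_id x).const_sub 1
    have h2 := (h1.pow (i+1)).div_const ((i:ℝ)+1)
    refine h2.congr_deriv ?_
    have hi : ((i:ℝ)+1) ≠ 0 := by positivity
    push_cast
    field_simp
  have hlog := Real.hasDerivAt_log hx
  have h := hsum.add hlog
  refine h.congr_deriv ?_
  have geom : (∑ i ∈ range n, (1-x)^i) * ((1-x) - 1) = (1-x)^n - 1 := geom_sum_mul _ _
  have : ∑ i ∈ range n, -(1-x)^i = -∑ i ∈ range n, (1-x)^i := by rw [Finset.sum_neg_distrib]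
  rw [this]
  field_simp
  nlinarith [geom]

lemma Hfun_nonpos {n : ℕ} (hn : Odd n) {y : ℝ} (hy : 0 < y) : Hfun n y ≤ 0 := by
  have hH1 : Hfun n 1 = 0 := by simp [Hfun]
  rcases lt_trichotomy y 1 with h | h | h
  · -- increasing on [y,1]
    have mono : StrictMonoOn (Hfun n) (Set.Icc y 1) := by
      apply strictMonoOn_of_deriv_pos (convex_Icc y 1)
      · intro z hz
        exact ((Hfun_hasDerivAt n (by linarith [hz.1] : z ≠ 0)).continuousAt).continuousWithinAt
      · intro z hz
        rw [interior_Icc] at hz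
        have hz0 : 0 < z := lt_trans hy hz.1
        rw [(Hfun_hasDerivAt n (ne_of_gt hz0)).deriv]
        have : (0:ℝ) < (1-z)^n := pow_pos (by linarith [hz.2]) n
        positivity
    have := mono (Set.left_mem_Icc.2 (le_of_lt h)) (Set.right_mem_Icc.2 (le_of_lt h)) h
    rw [hH1] at this; linarith
  · rw [h, hH1]
  · -- decreasing on [1,y]
    have anti : StrictAntiOn (Hfun n) (Set.Icc 1 y) := by
      apply strictAntiOn_of_deriv_neg (convex_Icc 1 y)
      · intro z hz
        exact ((Hfun_hasDerivAt n (by linarith [hz.1] : z ≠ 0)).continuousAt).continuousWithinAt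
      · intro z hz
        rw [interior_Icc] at hz
        have hz1 : 1 < z := hz.1
        rw [(Hfun_hasDerivAt n (by linarith : z ≠ 0)).deriv]
        have hneg : (1-z)^n < 0 := Odd.pow_neg hn (by linarith)
        exact div_neg_of_neg_of_pos hneg (by linarith)
    have := anti (Set.left_mem_Icc.2 (le_of_lt h)) (Set.right_mem_Icc.2 (le_of_lt h)) h
    rw [hH1] at this; linarith

lemma pointwise_ineq {n : ℕ} (hn : Odd n) {y : ℝ} (hy : 0 < y) :
    ∑ j ∈ Icc 1 n, (1/(j:ℝ) + ((-1:ℝ)^j/(j:ℝ)) * (n.choose j : ℝ) * y^j) ≤ - Real.log y := by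
  have icc_to_range : ∀ f : ℕ → ℝ, ∑ j ∈ Icc 1 n, f j = ∑ i ∈ range n, f (i+1) := by
    intro f
    rw [← Finset.Ico_add_one_right_eq_Icc, Finset.sum_Ico_eq_sum_range]
    simp [add_comm]
  rw [icc_to_range]
  have h1 : ∑ i ∈ range n, (1/((i+1:ℕ):ℝ) + ((-1:ℝ)^(i+1)/((i+1:ℕ):ℝ)) * (n.choose (i+1) : ℝ) * y^(i+1))
      = ∑ i ∈ range n, ((1:ℝ)/((i:ℕ)+1:ℝ)) + ∑ i ∈ range n, ((-1:ℝ)^(i+1) / ((i:ℕ)+1:ℝ)) * ((n.choose (i+1)) : ℝ) * y^(i+1) := by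
    rw [← Finset.sum_add_distrib]
    refine Finset.sum_congr rfl fun i _ => ?_
    push_cast; ring
  rw [h1, key_id', ← Finset.sum_add_distrib]
  have h3 : ∑ i ∈ range n, ((1:ℝ)/((i:ℕ)+1:ℝ) + ((1-y)^(i+1) - 1) / ((i:ℝ)+1))
      = ∑ i ∈ range n, (1-y)^(i+1) / ((i:ℝ)+1) := by
    refine Finset.sum_congr rfl fun i _ => ?_
    have hi : ((i:ℝ)+1) ≠ 0 := by positivity
    push_cast
    field_simp
    ring
  rw [h3]
  have := Hfun_nonpos hn hy
  unfold Hfun at this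
  linarith


/-- Let `k ≥ 1` and let `X : Ω → (0,∞)` be a random variable such that `X`,
`log(X)`, `X^j` and `X^{−j}` (`1 ≤ j ≤ 2k−1`) are integrable. Then, with
`b_{k,j} = ((−1)^j/j)·C(2k−1,j)`,
`∑_{j=1}^{2k−1} (1/j + b_{k,j}·E[X^j]·(E[X])^{−j}) ≤ log(E[X]) − E[log(X)]
  ≤ −∑_{j=1}^{2k−1} (1/j + b_{k,j}·E[X^{−j}]·(E[X])^{j})`. -/
theorem jensen_gap_log_raw_moment_bounds
    {Ω : Type*} [MeasurableSpace Ω] (P : Measure Ω) [IsProbabilityMeasure P]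
    (k : ℕ) (hk : 0 < k)
    (X : Ω → ℝ) (hX : ∀ ω, 0 < X ω)
    (hXint : Integrable X P)
    (hlogint : Integrable (fun ω => Real.log (X ω)) P)
    (hmom : ∀ j ∈ Finset.Icc 1 (2 * k - 1), Integrable (fun ω => X ω ^ j) P)
    (hmomneg : ∀ j ∈ Finset.Icc 1 (2 * k - 1),
      Integrable (fun ω => X ω ^ (-(j : ℤ))) P) :
    ∑ j ∈ Finset.Icc 1 (2 * k - 1),
        (1 / (j : ℝ) + ((-1 : ℝ) ^ j / (j : ℝ)) * ((2 * k - 1).choose j : ℝ) *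
          (∫ ω, X ω ^ j ∂P) * (∫ ω, X ω ∂P) ^ (-(j : ℤ)))
      ≤ Real.log (∫ ω, X ω ∂P) - ∫ ω, Real.log (X ω) ∂P ∧
    Real.log (∫ ω, X ω ∂P) - ∫ ω, Real.log (X ω) ∂P
      ≤ -∑ j ∈ Finset.Icc 1 (2 * k - 1),
          (1 / (j : ℝ) + ((-1 : ℝ) ^ j / (j : ℝ)) * ((2 * k - 1).choose j : ℝ) *
            (∫ ω, X ω ^ (-(j : ℤ)) ∂P) * (∫ ω, X ω ∂P) ^ (j : ℕ)) := by
  set n := 2 * k - 1 with hn_def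
  have hn : Odd n := by
    refine ⟨k - 1, ?_⟩
    omega
  set μ := ∫ ω, X ω ∂P with hμ_def
  have hμ : 0 < μ := by
    rw [hμ_def]
    rw [MeasureTheory.integral_pos_iff_support_of_nonneg_ae
      (Filter.Eventually.of_forall fun ω => (hX ω).le) hXint]
    have : Function.support X = Set.univ := by
      ext ω; simp [Function.support, (hX ω).ne']
    rw [this]
    simp
  constructor
  · -- lower bound
    set f : Ω → ℝ := fun ω => ∑ j ∈ Icc 1 n,
      (1/(j:ℝ) + (((-1:ℝ)^j/(j:ℝ)) * (n.choose j : ℝ) * μ^(-(j:ℤ))) * X ω ^ j) with hf_def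
    set g : Ω → ℝ := fun ω => Real.log μ - Real.log (X ω) with hg_def
    have hfint : Integrable f P := by
      apply integrable_finset_sum
      intro j hj
      exact (integrable_const _).add ((hmom j hj).const_mul _)
    have hgint : Integrable g P := (integrable_const _).sub hlogint
    have hle : ∀ ω, f ω ≤ g ω := by
      intro ω
      have hy : 0 < X ω / μ := div_pos (hX ω) hμ
      have := pointwise_ineq hn hy
      have heq : ∑ j ∈ Icc 1 n, (1/(j:ℝ) + ((-1:ℝ)^j/(j:ℝ)) * (n.choose j : ℝ) * (X ω / μ)^j)
          = f ω := by
        refine Finset.sum_congr rfl fun j hj => ?_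
        rw [div_pow, zpow_neg, zpow_natCast]
        field_simp
      rw [heq] at this
      have hlog : Real.log (X ω / μ) = Real.log (X ω) - Real.log μ :=
        Real.log_div (hX ω).ne' hμ.ne'
      rw [hg_def]
      simp only []
      rw [hlog] at this
      linarith
    have hint := integral_mono hfint hgint hle
    have hfval : ∫ ω, f ω ∂P = ∑ j ∈ Icc 1 n,
        (1/(j:ℝ) + ((-1:ℝ)^j/(j:ℝ)) * (n.choose j : ℝ) * (∫ ω, X ω ^ j ∂P) * μ^(-(j:ℤ))) := by
      rw [hf_def, integral_finset_sum]
      · refine Finset.sum_congr rfl fun j hj => ?_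
        rw [integral_add (integrable_const _) ((hmom j hj).const_mul _),
          integral_const, MeasureTheory.integral_const_mul]
        simp
        ring
      · intro j hj
        exact (integrable_const _).add ((hmom j hj).const_mul _)
    have hgval : ∫ ω, g ω ∂P = Real.log μ - ∫ ω, Real.log (X ω) ∂P := by
      rw [hg_def, integral_sub (integrable_const _) hlogint, integral_const]
      simp
    rw [hfval, hgval] at hint
    exact hint
  · -- upper bound
    set f : Ω → ℝ := fun ω => ∑ j ∈ Icc 1 n,
      (1/(j:ℝ) + (((-1:ℝ)^j/(j:ℝ)) * (n.choose j : ℝ) * μ^(j:ℕ)) * X ω ^ (-(j:ℤ))) with hf_def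
    set g : Ω → ℝ := fun ω => Real.log (X ω) - Real.log μ with hg_def
    have hfint : Integrable f P := by
      apply integrable_finset_sum
      intro j hj
      exact (integrable_const _).add ((hmomneg j hj).const_mul _)
    have hgint : Integrable g P := hlogint.sub (integrable_const _)
    have hle : ∀ ω, f ω ≤ g ω := by
      intro ω
      have hy : 0 < μ / X ω := div_pos hμ (hX ω)
      have := pointwise_ineq hn hy
      have heq : ∑ j ∈ Icc 1 n, (1/(j:ℝ) + ((-1:ℝ)^j/(j:ℝ)) * (n.choose j : ℝ) * (μ / X ω)^j)
          = f ω := by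
        refine Finset.sum_congr rfl fun j hj => ?_
        rw [div_pow, zpow_neg, zpow_natCast]
        field_simp
      rw [heq] at this
      have hlog : Real.log (μ / X ω) = Real.log μ - Real.log (X ω) :=
        Real.log_div hμ.ne' (hX ω).ne'
      rw [hg_def]
      simp only []
      rw [hlog] at this
      linarith
    have hint := integral_mono hfint hgint hle
    have hfval : ∫ ω, f ω ∂P = ∑ j ∈ Icc 1 n,
        (1/(j:ℝ) + ((-1:ℝ)^j/(j:ℝ)) * (n.choose j : ℝ) * (∫ ω, X ω ^ (-(j:ℤ)) ∂P) * μ^(j:ℕ)) := by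
      rw [hf_def, integral_finset_sum]
      · refine Finset.sum_congr rfl fun j hj => ?_
        rw [integral_add (integrable_const _) ((hmomneg j hj).const_mul _),
          integral_const, MeasureTheory.integral_const_mul]
        simp
        ring
      · intro j hj
        exact (integrable_const _).add ((hmomneg j hj).const_mul _)
    have hgval : ∫ ω, g ω ∂P = (∫ ω, Real.log (X ω) ∂P) - Real.log μ := by
      rw [hg_def, integral_sub hlogint (integrable_const _), integral_const]
      simp
    rw [hfval, hgval] at hint
    linarith
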